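/- The term rewriting system R obtained by orienting the equations x+e=x, e+x=x, (x+y)+z=x+(y+z), (x+y)·z=y·(x·z), (d·x)·y=x·(y+x), e·x=x, d·e=e left-to-right is confluent: if t rewrites in zero or more steps to both u and v, then u and v rewrite in zero or more steps to a common term. -/

import Mathlib

/-- Ground terms over constants d, e with binary operations + (add) and · (app). -/
inductive Tm : Type
  | d : Tm
  | e : Tm
  | add : Tm → Tm → Tm
  | app : Tm → Tm → Tm
  deriving DecidableEq

open Tm

/-- Root rewrite steps: instances of the oriented rules. -/
inductive Root : Tm → Tm → Prop
  | addE (x) : Root (add x e) x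
  | eAdd (x) : Root (add e x) x
  | assoc (x y z) : Root (add (add x y) z) (add x (add y z))
  | appAdd (x y z) : Root (app (add x y) z) (app y (app x z))
  | appD (x y) : Root (app (app d x) y) (app x (add y x))
  | appE (x) : Root (app e x) x
  | dE : Root (app d e) e

/-- One rewrite step: a root step applied at some subterm position. -/
inductive Step : Tm → Tm → Prop
  | root {t u} : Root t u → Step t u
  | addL {t t' u} : Step t t' → Step (add t u) (add t' u)
  | addR {t u u'} : Step u u' → Step (add t u) (add t u')
  | appL {t t' u} : Step t t' → Step (app t u) (app t' u)
  | appR {t u u'} : Step u u' → Step (app t u) (app t u')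

/-- Zero or more rewrite steps. -/
def Steps : Tm → Tm → Prop := Relation.ReflTransGen Step

/-- A normal form is a term to which no rule applies. -/
def NormalForm (t : Tm) : Prop := ∀ u, ¬ Step t u

/-- Provable equality in the equational theory (reflexive symmetric transitive
congruence closure of the rule instances). -/
def TermEq : Tm → Tm → Prop := Relation.EqvGen Step

/-! ### Auxiliary normalization machinery -/

/-- Normalize a top-level `add` of two terms. -/
def addNF : Tm → Tm → Tm
  | Tm.e, b => b
  | Tm.add x y, b => addNF x (addNF y b)
  | Tm.d, b => if b = Tm.e then Tm.d else Tm.add Tm.d b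
  | Tm.app t u, b => if b = Tm.e then Tm.app t u else Tm.add (Tm.app t u) b

/-- Normalize a top-level `app` of two terms. -/
def appNF : Tm → Tm → Tm
  | Tm.e, b => b
  | Tm.d, b => if b = Tm.e then Tm.e else Tm.app Tm.d b
  | Tm.add x y, b => appNF y (appNF x b)
  | Tm.app Tm.d u, b => appNF u (addNF b u)
  | Tm.app t u, b => Tm.app (Tm.app t u) b

/-- Full normalization. -/
def nf : Tm → Tm
  | Tm.d => Tm.d
  | Tm.e => Tm.e
  | Tm.add a b => addNF (nf a) (nf b)
  | Tm.app a b => appNF (nf a) (nf b)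

/-- Syntactic normal-form predicate. -/
def NFP : Tm → Prop
  | Tm.d => True
  | Tm.e => True
  | Tm.add x y => NFP x ∧ NFP y ∧ x ≠ Tm.e ∧ y ≠ Tm.e ∧ ∀ p q, x ≠ Tm.add p q
  | Tm.app x y => NFP x ∧ NFP y ∧ x ≠ Tm.e ∧ (∀ p q, x ≠ Tm.add p q) ∧
      (∀ p, x ≠ Tm.app Tm.d p) ∧ ¬(x = Tm.d ∧ y = Tm.e)

theorem Steps.refl {t : Tm} : Steps t t := Relation.ReflTransGen.refl

theorem Steps.trans {t u v : Tm} (h : Steps t u) (h' : Steps u v) : Steps t v :=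
  Relation.ReflTransGen.trans h h'

theorem Steps.single {t u : Tm} (h : Step t u) : Steps t u :=
  Relation.ReflTransGen.single h

theorem Steps.addL {t t' u : Tm} (h : Steps t t') : Steps (add t u) (add t' u) := by
  induction h with
  | refl => exact Steps.refl
  | tail _ h ih => exact ih.trans (Steps.single (Step.addL h))

theorem Steps.addR {t u u' : Tm} (h : Steps u u') : Steps (add t u) (add t u') := by
  induction h with
  | refl => exact Steps.refl
  | tail _ h ih => exact ih.trans (Steps.single (Step.addR h))

theorem Steps.appL {t t' u : Tm} (h : Steps t t') : Steps (app t u) (app t' u) := by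
  induction h with
  | refl => exact Steps.refl
  | tail _ h ih => exact ih.trans (Steps.single (Step.appL h))

theorem Steps.appR {t u u' : Tm} (h : Steps u u') : Steps (app t u) (app t u') := by
  induction h with
  | refl => exact Steps.refl
  | tail _ h ih => exact ih.trans (Steps.single (Step.appR h))

/-- `add a b` reduces to `addNF a b`. -/
theorem steps_addNF : ∀ a b : Tm, Steps (add a b) (addNF a b)
  | Tm.e, b => Steps.single (Step.root (Root.eAdd b))
  | Tm.add x y, b =>
      (Steps.single (Step.root (Root.assoc x y b))).trans
        ((Steps.addR (steps_addNF y b)).trans (steps_addNF x (addNF y b)))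
  | Tm.d, b => by
      by_cases hb : b = Tm.e
      · subst hb; simp only [addNF, if_pos rfl]
        exact Steps.single (Step.root (Root.addE Tm.d))
      · simp only [addNF, if_neg hb]; exact Steps.refl
  | Tm.app t u, b => by
      by_cases hb : b = Tm.e
      · subst hb; simp only [addNF, if_pos rfl]
        exact Steps.single (Step.root (Root.addE (app t u)))
      · simp only [addNF, if_neg hb]; exact Steps.refl

/-- `app a b` reduces to `appNF a b`. -/
theorem steps_appNF : ∀ a b : Tm, Steps (app a b) (appNF a b)
  | Tm.e, b => Steps.single (Step.root (Root.appE b))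
  | Tm.d, b => by
      by_cases hb : b = Tm.e
      · subst hb; simp only [appNF, if_pos rfl]
        exact Steps.single (Step.root Root.dE)
      · simp only [appNF, if_neg hb]; exact Steps.refl
  | Tm.add x y, b =>
      (Steps.single (Step.root (Root.appAdd x y b))).trans
        ((Steps.appR (steps_appNF x b)).trans (steps_appNF y (appNF x b)))
  | Tm.app Tm.d u, b =>
      (Steps.single (Step.root (Root.appD u b))).trans
        ((Steps.appR (steps_addNF b u)).trans (steps_appNF u (addNF b u)))
  | Tm.app Tm.e u, b => Steps.refl
  | Tm.app (Tm.add p q) u, b => Steps.refl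
  | Tm.app (Tm.app p q) u, b => Steps.refl

/-- Every term reduces to its normal form. -/
theorem steps_nf : ∀ t : Tm, Steps t (nf t)
  | Tm.d => Steps.refl
  | Tm.e => Steps.refl
  | Tm.add a b =>
      ((Steps.addL (steps_nf a)).trans (Steps.addR (steps_nf b))).trans
        (steps_addNF (nf a) (nf b))
  | Tm.app a b =>
      ((Steps.appL (steps_nf a)).trans (Steps.appR (steps_nf b))).trans
        (steps_appNF (nf a) (nf b))

/-- `addNF` preserves normal forms. -/
theorem nfp_addNF : ∀ a b : Tm, NFP a → NFP b → NFP (addNF a b)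
  | Tm.e, b, _, hb => hb
  | Tm.add x y, b, ha, hb => by
      obtain ⟨hx, hy, _, _, _⟩ := ha
      exact nfp_addNF x (addNF y b) hx (nfp_addNF y b hy hb)
  | Tm.d, b, _, hb => by
      by_cases hbe : b = Tm.e
      · simp only [addNF, if_pos hbe]; trivial
      · simp only [addNF, if_neg hbe]
        exact ⟨trivial, hb, by simp, hbe, by simp⟩
  | Tm.app t u, b, ha, hb => by
      by_cases hbe : b = Tm.e
      · simp only [addNF, if_pos hbe]; exact ha
      · simp only [addNF, if_neg hbe]
        exact ⟨ha, hb, by simp, hbe, by simp⟩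

/-- `appNF` preserves normal forms. -/
theorem nfp_appNF : ∀ a b : Tm, NFP a → NFP b → NFP (appNF a b)
  | Tm.e, b, _, hb => hb
  | Tm.d, b, _, hb => by
      by_cases hbe : b = Tm.e
      · simp only [appNF, if_pos hbe]; trivial
      · simp only [appNF, if_neg hbe]
        exact ⟨trivial, hb, by simp, by simp, by simp, by simp [hbe]⟩
  | Tm.add x y, b, ha, hb => by
      obtain ⟨hx, hy, _, _, _⟩ := ha
      exact nfp_appNF y (appNF x b) hy (nfp_appNF x b hx hb)
  | Tm.app Tm.d u, b, ha, hb => by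
      obtain ⟨_, hu, _, _, _, _⟩ := ha
      exact nfp_appNF u (addNF b u) hu (nfp_addNF b u hb hu)
  | Tm.app Tm.e u, b, ha, hb => by
      simp only [appNF]
      exact ⟨ha, hb, by simp, by simp, by simp, by simp⟩
  | Tm.app (Tm.add p q) u, b, ha, hb => by
      simp only [appNF]
      exact ⟨ha, hb, by simp, by simp, by simp, by simp⟩
  | Tm.app (Tm.app p q) u, b, ha, hb => by
      simp only [appNF]
      exact ⟨ha, hb, by simp, by simp, by simp, by simp⟩

/-- `nf` produces normal forms. -/
theorem nfp_nf : ∀ t : Tm, NFP (nf t)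
  | Tm.d => trivial
  | Tm.e => trivial
  | Tm.add a b => nfp_addNF (nf a) (nf b) (nfp_nf a) (nfp_nf b)
  | Tm.app a b => nfp_appNF (nf a) (nf b) (nfp_nf a) (nfp_nf b)

/-- Right unit for `addNF` on normal forms. -/
theorem addNF_e : ∀ a : Tm, NFP a → addNF a Tm.e = a
  | Tm.e, _ => rfl
  | Tm.d, _ => rfl
  | Tm.app t u, _ => rfl
  | Tm.add x y, ha => by
      obtain ⟨hx, hy, hxe, hye, hxadd⟩ := ha
      have h1 : addNF y Tm.e = y := addNF_e y hy
      simp only [addNF, h1]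
      match x, hxe, hxadd with
      | Tm.d, _, _ => simp [addNF, if_neg hye]
      | Tm.app p q, _, _ => simp [addNF, if_neg hye]
      | Tm.e, hxe, _ => exact absurd rfl hxe
      | Tm.add p q, _, hxadd => exact absurd rfl (hxadd p q)

/-- Associativity-like identity for `addNF` (holds unconditionally). -/
theorem addNF_assoc : ∀ a b c : Tm, addNF (addNF a b) c = addNF a (addNF b c)
  | Tm.e, b, c => rfl
  | Tm.add x y, b, c => by
      simp only [addNF]
      rw [addNF_assoc x (addNF y b) c, addNF_assoc y b c]
  | Tm.d, b, c => by
      by_cases hbe : b = Tm.e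
      · subst hbe; simp only [addNF, if_pos rfl, ↓reduceIte]; rfl
      · simp only [addNF, if_neg hbe]
  | Tm.app t u, b, c => by
      by_cases hbe : b = Tm.e
      · subst hbe; simp only [addNF, if_pos rfl, ↓reduceIte]; rfl
      · simp only [addNF, if_neg hbe]

/-- Key identity for the `appAdd` rule (holds unconditionally). -/
theorem appNF_addNF : ∀ a b c : Tm, appNF (addNF a b) c = appNF b (appNF a c)
  | Tm.e, b, c => rfl
  | Tm.add x y, b, c => by
      simp only [addNF, appNF]
      rw [appNF_addNF x (addNF y b) c, appNF_addNF y b (appNF x c)]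
  | Tm.d, b, c => by
      by_cases hbe : b = Tm.e
      · subst hbe; simp only [addNF, if_pos rfl, appNF, ↓reduceIte]
      · simp only [addNF, if_neg hbe, appNF]
  | Tm.app t u, b, c => by
      by_cases hbe : b = Tm.e
      · subst hbe; simp [addNF, appNF]
      · simp only [addNF, if_neg hbe, appNF]

/-- A root step preserves the normal form. -/
theorem nf_root : ∀ {t u : Tm}, Root t u → nf t = nf u
  | _, _, Root.addE x => by
      simp only [nf]
      exact addNF_e (nf x) (nfp_nf x)
  | _, _, Root.eAdd x => by simp only [nf]; rfl
  | _, _, Root.assoc x y z => by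
      simp only [nf]; exact addNF_assoc (nf x) (nf y) (nf z)
  | _, _, Root.appAdd x y z => by
      simp only [nf]; exact appNF_addNF (nf x) (nf y) (nf z)
  | _, _, Root.appD x y => by
      simp only [nf]
      by_cases hx : nf x = Tm.e
      · rw [hx]
        simp only [appNF, addNF_e (nf y) (nfp_nf y), ↓reduceIte]
      · rw [show appNF Tm.d (nf x) = app Tm.d (nf x) by
          simp only [appNF, if_neg hx]]
        match nf x, hx with
        | Tm.d, _ => rfl
        | Tm.add p q, _ => rfl
        | Tm.app p q, _ => rfl
        | Tm.e, hx => exact absurd rfl hx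
  | _, _, Root.appE x => by simp only [nf]; rfl
  | _, _, Root.dE => rfl

/-- One rewrite step preserves the normal form. -/
theorem nf_step {t u : Tm} (h : Step t u) : nf t = nf u := by
  induction h with
  | root h => exact nf_root h
  | addL _ ih => simp only [nf, ih]
  | addR _ ih => simp only [nf, ih]
  | appL _ ih => simp only [nf, ih]
  | appR _ ih => simp only [nf, ih]

/-- Rewriting preserves the normal form. -/
theorem nf_steps {t u : Tm} (h : Steps t u) : nf t = nf u := by
  induction h with
  | refl => rfl
  | tail _ h ih => exact ih.trans (nf_step h)

/-- the rewrite system R is confluent. -/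
theorem R_confluent :
    ∀ t u v : Tm, Steps t u → Steps t v → ∃ w : Tm, Steps u w ∧ Steps v w := by
  intro t u v htu htv
  exact ⟨nf t, (nf_steps htu ▸ steps_nf u), (nf_steps htv ▸ steps_nf v)⟩
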